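/- Two reals x and y lie in the same connected component of the Shelah–Soifer graph (i.e., x = y or x and y are joined by a path of finite length) if and only if x − y = q + z·√2 for some rational q and some integer z. -/

import Mathlib

/-- The Shelah–Soifer graph on `ℝ`: `x` and `y` are adjacent iff
`x - y ∈ (ℚ + √2) ∪ (ℚ + (-√2))`. -/
noncomputable def ShelahSoiferGraph : SimpleGraph ℝ where
  Adj x y := (∃ q : ℚ, x - y = q + Real.sqrt 2) ∨ (∃ q : ℚ, x - y = q - Real.sqrt 2)
  symm := by
    constructor
    rintro x y (⟨q, hq⟩ | ⟨q, hq⟩)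
    · exact Or.inr ⟨-q, by push_cast; linarith⟩
    · exact Or.inl ⟨-q, by push_cast; linarith⟩
  loopless := by
    constructor
    rintro x (⟨q, hq⟩ | ⟨q, hq⟩)
    · exact irrational_sqrt_two ⟨-q, by push_cast; linarith⟩
    · exact irrational_sqrt_two ⟨q, by push_cast; linarith⟩

lemma shelahSoifer_diff_of_adj {x y : ℝ} (h : ShelahSoiferGraph.Adj x y) :
    ∃ (q : ℚ) (z : ℤ), x - y = q + z * Real.sqrt 2 := by
  rcases h with ⟨q, hq⟩ | ⟨q, hq⟩
  · exact ⟨q, 1, by push_cast; linarith⟩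
  · exact ⟨q, -1, by push_cast; linarith⟩

lemma shelahSoifer_reach_aux (x : ℝ) (z : ℤ) :
    ∀ q : ℚ, ShelahSoiferGraph.Reachable x (x - (q + z * Real.sqrt 2)) := by
  induction z using Int.induction_on with
  | zero =>
    intro q
    have h1 : ShelahSoiferGraph.Adj x (x - Real.sqrt 2) :=
      Or.inl ⟨0, by push_cast; ring⟩
    have h2 : ShelahSoiferGraph.Adj (x - Real.sqrt 2) (x - (q + (0 : ℤ) * Real.sqrt 2)) :=
      Or.inr ⟨q, by push_cast; ring⟩
    exact h1.reachable.trans h2.reachable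
  | succ n ih =>
    intro q
    have h2 : ShelahSoiferGraph.Adj (x - (q + (n : ℤ) * Real.sqrt 2))
        (x - (q + ((n : ℤ) + 1) * Real.sqrt 2)) :=
      Or.inl ⟨0, by push_cast; ring⟩
    refine (ih q).trans ?_
    push_cast
    exact h2.reachable
  | pred n ih =>
    intro q
    have h2 : ShelahSoiferGraph.Adj (x - (q + (-(n : ℤ)) * Real.sqrt 2))
        (x - (q + (-(n : ℤ) - 1) * Real.sqrt 2)) :=
      Or.inr ⟨0, by push_cast; ring⟩
    refine (ih q).trans ?_
    push_cast
    exact h2.reachable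

/-- Two reals lie in the same connected component of the Shelah–Soifer graph iff
their difference is of the form `q + z·√2` with `q` rational and `z` an integer. -/
theorem shelahSoifer_reachable_iff (x y : ℝ) :
    ShelahSoiferGraph.Reachable x y ↔
      ∃ (q : ℚ) (z : ℤ), x - y = q + z * Real.sqrt 2 := by
  constructor
  · intro h
    obtain ⟨w⟩ := h
    induction w with
    | nil => exact ⟨0, 0, by simp⟩
    | cons h _ ih =>
      obtain ⟨q1, z1, h1⟩ := shelahSoifer_diff_of_adj h
      obtain ⟨q2, z2, h2⟩ := ih
      exact ⟨q1 + q2, z1 + z2, by push_cast; linarith⟩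
  · rintro ⟨q, z, h⟩
    have hy : y = x - (q + z * Real.sqrt 2) := by linarith
    rw [hy]
    exact shelahSoifer_reach_aux x z q
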